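/- Suppose c : [ω₁]² → 2 realizes all patterns, and let τ[X] denote the associated topology on each X ⊆ ω₁. If X, Y ⊆ ω₁ have countable intersection, then there is no uncountable Z ⊆ X for which there exists a continuous injection from the subspace Z of (X, τ[X]) into (Y, τ[Y]). -/

import Mathlib

/-- The first uncountable ordinal. -/
noncomputable def omega1 : Ordinal := (Cardinal.aleph 1).ord

/-- The coloring `c : [ω₁]² → 2` realizes all patterns. -/
def RealizesAllPatterns (c : Ordinal → Ordinal → Fin 2) : Prop :=
  ∀ (k l : ℕ), 0 < k → 0 < l →
    ∀ (A : Set (Fin k → Ordinal)) (B : Set (Fin l → Ordinal)),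
      (∀ a ∈ A, StrictMono a ∧ ∀ i, a i < omega1) →
      (∀ b ∈ B, StrictMono b ∧ ∀ j, b j < omega1) →
      (∀ a ∈ A, ∀ a' ∈ A, a ≠ a' → ∀ i i', a i ≠ a' i') →
      (∀ b ∈ B, ∀ b' ∈ B, b ≠ b' → ∀ j j', b j ≠ b' j') →
      ¬ A.Countable → ¬ B.Countable →
      ∀ (χ : Fin k → Fin 2) (π : Fin k → Fin l),
        ∃ a ∈ A, ∃ b ∈ B, (∀ (i : Fin k) (j : Fin l), a i < b j) ∧
          ∀ i : Fin k, c (a i) (b (π i)) = χ i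

/-- `W_α = {α} ∪ {β < ω₁ : α < β and c(α,β) = 1}`. -/
noncomputable def Wset (c : Ordinal → Ordinal → Fin 2) (α : Ordinal) : Set Ordinal :=
  {α} ∪ {β | β < omega1 ∧ α < β ∧ c α β = 1}

/-- The topology `τ[X]` on `X ⊆ ω₁`: generated by the subbasis consisting of the
sets `W_ξ ∩ X` and `X \ W_ξ` for `ξ ∈ X` (each `W_ξ ∩ X` is declared clopen). -/
noncomputable def tauTop (c : Ordinal → Ordinal → Fin 2) (X : Set Ordinal) :
    TopologicalSpace X :=
  TopologicalSpace.generateFrom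
    ({s | ∃ ξ ∈ X, s = {x : X | x.val ∈ Wset c ξ}} ∪
     {s | ∃ ξ ∈ X, s = {x : X | x.val ∉ Wset c ξ}})

section Helpers
open Set

variable {α : Type*} {β : Type*}

lemma countable_of_image {g : α → β} {T : Set α} (hi : (g '' T).Countable)
    (hg : Set.InjOn g T) : T.Countable := by
  haveI : Countable ↥(g '' T) := hi.to_subtype
  exact Set.countable_coe_iff.mp (Countable.of_equiv _ (hg.bijOn_image.equiv _).symm)

lemma uncount_diff {T S : Set α} (hT : ¬ T.Countable) (hS : S.Countable) :
    ¬ (T \ S).Countable := by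
  intro h
  exact hT ((h.union hS).mono (fun x hx => by by_cases hx' : x ∈ S <;> simp [hx, hx']))

lemma exists_fiber_uncountable {T : Set α} (hT : ¬ T.Countable) (g : α → β) [Countable β] :
    ∃ v, ¬ {z ∈ T | g z = v}.Countable := by
  by_contra h
  push_neg at h
  apply hT
  have hsub : T ⊆ ⋃ v : β, {z ∈ T | g z = v} := by
    intro z hz
    exact Set.mem_iUnion_of_mem (g z) ⟨hz, rfl⟩
  exact (Set.countable_iUnion h).mono hsub

lemma delta_system {γ : Type*} [DecidableEq γ] : ∀ (n : ℕ) (𝔉 : Set (Finset γ)),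
    (∀ F ∈ 𝔉, F.card = n) → ¬ 𝔉.Countable →
    ∃ R : Finset γ, ∃ 𝔊 ⊆ 𝔉, ¬ 𝔊.Countable ∧
      ∀ F ∈ 𝔊, ∀ F' ∈ 𝔊, F ≠ F' → F ∩ F' = R := by
  intro n
  induction n with
  | zero =>
    intro 𝔉 hcard hunc
    exact absurd ((Set.countable_singleton ∅).mono
      (fun F hF => by simpa using Finset.card_eq_zero.mp (hcard F hF))) hunc
  | succ n ih =>
    intro 𝔉 hcard hunc
    by_cases hx : ∃ x, ¬ {F ∈ 𝔉 | x ∈ F}.Countable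
    · obtain ⟨x, hx⟩ := hx
      have hinj : Set.InjOn (fun F => Finset.erase F x) {F ∈ 𝔉 | x ∈ F} := by
        intro F hF F' hF' h
        simp only at h
        rw [← Finset.insert_erase hF.2, h, Finset.insert_erase hF'.2]
      have hunc' : ¬ ((fun F => Finset.erase F x) '' {F ∈ 𝔉 | x ∈ F}).Countable := by
        intro h; exact hx (countable_of_image h hinj)
      have hcard' : ∀ F ∈ (fun F => Finset.erase F x) '' {F ∈ 𝔉 | x ∈ F}, F.card = n := by
        rintro _ ⟨F, hF, rfl⟩
        simp only [Finset.card_erase_of_mem hF.2, hcard F hF.1, Nat.add_sub_cancel]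
      obtain ⟨R, 𝔊', h𝔊'sub, h𝔊'unc, h𝔊'⟩ := ih _ hcard' hunc'
      refine ⟨insert x R, {F | (F ∈ 𝔉 ∧ x ∈ F) ∧ F.erase x ∈ 𝔊'}, fun F hF => hF.1.1, ?_, ?_⟩
      · intro h
        apply h𝔊'unc
        have hsub : 𝔊' ⊆ (fun F => Finset.erase F x) ''
            {F | (F ∈ 𝔉 ∧ x ∈ F) ∧ F.erase x ∈ 𝔊'} := by
          intro G hG
          obtain ⟨F, hF, rfl⟩ := h𝔊'sub hG
          exact ⟨F, ⟨hF, hG⟩, rfl⟩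
        exact ((h.image _).mono hsub)
      · rintro F ⟨hFx, hF⟩ F' ⟨hF'x, hF'⟩ hne
        have hne' : F.erase x ≠ F'.erase x := fun h => hne (hinj hFx hF'x h)
        have h1 := h𝔊' _ hF _ hF' hne'
        rw [← h1]
        ext y
        simp only [Finset.mem_inter, Finset.mem_insert, Finset.mem_erase]
        by_cases hy : y = x
        · subst hy; simp [hFx.2, hF'x.2]
        · simp [hy]
    · push_neg at hx
      have hz : ∀ C ⊆ {𝔊 | 𝔊 ⊆ 𝔉 ∧ ∀ F ∈ 𝔊, ∀ F' ∈ 𝔊, F ≠ F' → F ∩ F' = ∅},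
          IsChain (· ⊆ ·) C → ∃ ub ∈ {𝔊 | 𝔊 ⊆ 𝔉 ∧ ∀ F ∈ 𝔊, ∀ F' ∈ 𝔊, F ≠ F' → F ∩ F' = ∅},
          ∀ s ∈ C, s ⊆ ub := by
        intro C hC hchain
        refine ⟨⋃₀ C, ⟨?_, ?_⟩, fun s hs => subset_sUnion_of_mem hs⟩
        · exact sUnion_subset (fun s hs => (hC hs).1)
        · rintro F ⟨s, hs, hFs⟩ F' ⟨s', hs', hF's'⟩ hne
          rcases hchain.total hs hs' with h | h
          · exact (hC hs').2 F (h hFs) F' hF's' hne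
          · exact (hC hs).2 F hFs F' (h hF's') hne
      obtain ⟨M, hM⟩ := zorn_subset _ hz
      refine ⟨∅, M, hM.prop.1, ?_, hM.prop.2⟩
      intro hMc
      apply hunc
      have hU : (⋃ F ∈ M, (F : Set γ)).Countable :=
        Set.Countable.biUnion hMc (fun F _ => F.countable_toSet)
      have hcover : 𝔉 ⊆ M ∪ ⋃ x ∈ ⋃ F ∈ M, (F : Set γ), {F ∈ 𝔉 | x ∈ F} := by
        intro G hG
        by_cases hGM : G ∈ M
        · exact Or.inl hGM
        · right
          by_cases hmeet : ∀ F ∈ M, G ∩ F = ∅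
          · exfalso
            apply hGM
            have hins : insert G M ∈ {𝔊 | 𝔊 ⊆ 𝔉 ∧ ∀ F ∈ 𝔊, ∀ F' ∈ 𝔊, F ≠ F' → F ∩ F' = ∅} := by
              constructor
              · exact insert_subset hG hM.prop.1
              · rintro F (rfl | hF) F' (rfl | hF') hne
                · exact absurd rfl hne
                · exact hmeet F' hF'
                · rw [Finset.inter_comm]; exact hmeet F hF
                · exact hM.prop.2 F hF F' hF' hne
            exact (hM.2 hins (subset_insert _ _)) (mem_insert _ _)
          · push_neg at hmeet
            obtain ⟨F, hFM, hFG⟩ := hmeet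
            obtain ⟨y, hy⟩ := hFG
            rw [Finset.mem_inter] at hy
            exact mem_biUnion (mem_biUnion hFM hy.2) ⟨hG, hy.1⟩
      exact (Set.Countable.union hMc
        (Set.Countable.biUnion hU (fun x _ => hx x))).mono hcover

end Helpers

lemma nbhd_extract (c : Ordinal → Ordinal → Fin 2) (X Y : Set Ordinal) (Z : Set ↥X)
    (f : ↥Z → ↥Y)
    (hcont : @Continuous ↥Z ↥Y (TopologicalSpace.induced Subtype.val (tauTop c X))
      (tauTop c Y) f) (z : ↥Z) :
    ∃ F : Finset Ordinal, ↑F ⊆ X ∧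
      ∀ w : ↥Z, (∀ ξ ∈ F, (((w : ↥X) : Ordinal) ∈ Wset c ξ ↔ ((z : ↥X) : Ordinal) ∈ Wset c ξ)) →
        ((f w : Ordinal) ∈ Wset c (f z : Ordinal)) := by
  classical
  letI tZ := TopologicalSpace.induced (Subtype.val : ↥Z → ↥X) (tauTop c X)
  letI tY := tauTop c Y
  set 𝒮 : Set (Set ↥X) := ({s | ∃ ξ ∈ X, s = {x : ↥X | x.val ∈ Wset c ξ}} ∪
     {s | ∃ ξ ∈ X, s = {x : ↥X | x.val ∉ Wset c ξ}}) with h𝒮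
  have htZ : tZ = TopologicalSpace.generateFrom
      ((fun s => (Subtype.val : ↥Z → ↥X) ⁻¹' s) '' 𝒮) := induced_generateFrom_eq
  have hbasis := TopologicalSpace.isTopologicalBasis_of_subbasis (t := tZ) htZ
  have hV : @IsOpen _ tY {y : ↥Y | (y : Ordinal) ∈ Wset c (f z : Ordinal)} :=
    TopologicalSpace.isOpen_generateFrom_of_mem (Or.inl ⟨(f z : Ordinal), (f z).2, rfl⟩)
  have hzV : z ∈ f ⁻¹' {y : ↥Y | (y : Ordinal) ∈ Wset c (f z : Ordinal)} := by
    show (f z : Ordinal) ∈ Wset c (f z : Ordinal)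
    exact Set.mem_union_left _ rfl
  obtain ⟨b, ⟨t, ⟨htfin, ht𝒮⟩, rfl⟩, hzb, hbsub⟩ :=
    hbasis.exists_subset_of_mem_open hzV (hcont.isOpen_preimage _ hV)
  have hwit : ∀ s ∈ t, ∃ ξ, ξ ∈ X ∧
      (s = Subtype.val ⁻¹' {x : ↥X | x.val ∈ Wset c ξ} ∨
       s = Subtype.val ⁻¹' {x : ↥X | x.val ∉ Wset c ξ}) := by
    intro s hs
    obtain ⟨u, hu, rfl⟩ := ht𝒮 hs
    rcases hu with ⟨ξ, hξ, rfl⟩ | ⟨ξ, hξ, rfl⟩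
    · exact ⟨ξ, hξ, Or.inl rfl⟩
    · exact ⟨ξ, hξ, Or.inr rfl⟩
  choose! ξfun hξX hξform using hwit
  refine ⟨(htfin.image ξfun).toFinset, ?_, ?_⟩
  · intro ξ hξ
    rw [Set.Finite.coe_toFinset] at hξ
    obtain ⟨s, hs, rfl⟩ := hξ
    exact hξX s hs
  · intro w hw
    apply hbsub
    intro s hs
    have hzs : z ∈ s := hzb s hs
    have hmem : ξfun s ∈ (htfin.image ξfun).toFinset := by
      rw [Set.Finite.mem_toFinset]; exact ⟨s, hs, rfl⟩
    have hiff := hw (ξfun s) hmem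
    rcases hξform s hs with h | h
    · rw [h] at hzs ⊢
      exact hiff.mpr hzs
    · rw [h] at hzs ⊢
      exact fun hmem' => hzs (hiff.mp hmem')

lemma mem_Wset_iff {c : Ordinal → Ordinal → Fin 2} {ξ β : Ordinal} (h1 : ξ < β)
    (h2 : β < omega1) : β ∈ Wset c ξ ↔ c ξ β = 1 := by
  constructor
  · rintro (h | h)
    · exact absurd h h1.ne'
    · exact h.2.2
  · intro h
    exact Or.inr ⟨h2, h1, h⟩

/-- tuple enumeration of a finset, defaulting to 0. -/
noncomputable def tupD (m : ℕ) (s : Finset Ordinal) : Fin m → Ordinal :=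
  if h : s.card = m then (s.orderEmbOfFin h : Fin m → Ordinal) else fun _ => 0

lemma tupD_eq {m : ℕ} {s : Finset Ordinal} (h : s.card = m) :
    tupD m s = s.orderEmbOfFin h := dif_pos h

/-- **Theorem (Moore).** If `c` realizes all patterns and `X, Y ⊆ ω₁` have
countable intersection, then no uncountable subspace of `(X, τ[X])` admits a
continuous injection into `(Y, τ[Y])`. -/
theorem statement17 (c : Ordinal → Ordinal → Fin 2) (hc : RealizesAllPatterns c)
    (X Y : Set Ordinal) (hX : X ⊆ Set.Iio omega1) (hY : Y ⊆ Set.Iio omega1)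
    (hXY : (X ∩ Y).Countable) :
    ¬ ∃ Z : Set X, ¬ Z.Countable ∧ ∃ f : Z → Y,
        @Continuous Z Y (TopologicalSpace.induced Subtype.val (tauTop c X))
          (tauTop c Y) f ∧ Function.Injective f := by
  classical
  rintro ⟨Z, hZunc, f, hcont, hinj⟩
  haveI hZne : Nonempty ↥Z := by
    rw [Set.nonempty_coe_sort]
    by_contra h
    rw [Set.not_nonempty_iff_eq_empty] at h
    exact hZunc (h ▸ Set.countable_empty)
  choose F hFX hFP using nbhd_extract c X Y Z f hcont
  set ord : ↥Z → Ordinal := fun z => ((z : ↥X) : Ordinal) with hord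
  set fo : ↥Z → Ordinal := fun z => ((f z : ↥Y) : Ordinal) with hfo
  have ordinj : Function.Injective ord :=
    fun z z' h => Subtype.val_injective (Subtype.val_injective h)
  have foinj : Function.Injective fo :=
    fun z z' h => hinj (Subtype.val_injective h)
  have ordX : ∀ z, ord z ∈ X := fun z => (z : ↥X).2
  have foY : ∀ z, fo z ∈ Y := fun z => (f z).2
  have ordlt : ∀ z, ord z < omega1 := fun z => hX (ordX z)
  have folt : ∀ z, fo z < omega1 := fun z => hY (foY z)
  -- start with the whole (uncountable) index set
  have hT0 : ¬ (Set.univ : Set ↥Z).Countable := by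
    rw [Set.countable_univ_iff, Set.countable_coe_iff]
    exact hZunc
  -- remove points whose ordinal is in Y or whose image ordinal is in X
  have hbad1 : {z : ↥Z | ord z ∈ Y}.Countable := by
    apply countable_of_image (g := ord) _ ordinj.injOn
    apply hXY.mono
    rintro _ ⟨z, hz, rfl⟩
    exact ⟨ordX z, hz⟩
  have hbad2 : {z : ↥Z | fo z ∈ X}.Countable := by
    apply countable_of_image (g := fo) _ foinj.injOn
    apply hXY.mono
    rintro _ ⟨z, hz, rfl⟩
    exact ⟨hz, foY z⟩
  set T1 : Set ↥Z := Set.univ \ ({z : ↥Z | ord z ∈ Y} ∪ {z : ↥Z | fo z ∈ X}) with hT1def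
  have hT1unc : ¬ T1.Countable := uncount_diff hT0 (hbad1.union hbad2)
  have hT1a : ∀ z ∈ T1, ord z ∉ Y := fun z hz h => hz.2 (Or.inl h)
  have hT1b : ∀ z ∈ T1, fo z ∉ X := fun z hz h => hz.2 (Or.inr h)
  -- constant cardinality of F z
  obtain ⟨n, hT2unc⟩ := exists_fiber_uncountable hT1unc (fun z => (F z).card)
  set T2 := {z ∈ T1 | (F z).card = n} with hT2def
  -- Δ-system step: get a root R
  have hΔ : ∃ R : Finset Ordinal, ∃ T3 ⊆ T2, ¬ T3.Countable ∧
      (∀ z ∈ T3, R ⊆ F z) ∧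
      (∀ z ∈ T3, ∀ z' ∈ T3, z ≠ z' → F z ∩ F z' = R) := by
    by_cases hFim : (F '' T2).Countable
    · -- some fiber of F is uncountable; take R := the common value
      have hfib : ∃ G ∈ F '' T2, ¬ {z ∈ T2 | F z = G}.Countable := by
        by_contra h
        push_neg at h
        apply hT2unc
        have hsub : T2 ⊆ ⋃ G ∈ F '' T2, {z ∈ T2 | F z = G} := by
          intro z hz
          exact Set.mem_biUnion ⟨z, hz, rfl⟩ ⟨hz, rfl⟩
        exact (Set.Countable.biUnion hFim h).mono hsub
      obtain ⟨G, _, hGunc⟩ := hfib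
      refine ⟨G, {z ∈ T2 | F z = G}, fun z hz => hz.1, hGunc, ?_, ?_⟩
      · intro z hz; rw [hz.2]
      · intro z hz z' hz' _
        rw [hz.2, hz'.2, Finset.inter_self]
    · -- genuine Δ-system
      have hcard : ∀ G ∈ F '' T2, G.card = n := by
        rintro _ ⟨z, hz, rfl⟩; exact hz.2
      obtain ⟨R, 𝔊, h𝔊sub, h𝔊unc, h𝔊⟩ := delta_system n (F '' T2) hcard hFim
      have hsec : ∀ G ∈ 𝔊, ∃ z, z ∈ T2 ∧ F z = G := fun G hG => h𝔊sub hG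
      choose! sec hsec1 hsec2 using hsec
      refine ⟨R, sec '' 𝔊, ?_, ?_, ?_, ?_⟩
      · rintro _ ⟨G, hG, rfl⟩; exact hsec1 G hG
      · intro h
        apply h𝔊unc
        have : 𝔊 ⊆ F '' (sec '' 𝔊) := by
          intro G hG
          exact ⟨sec G, ⟨G, hG, rfl⟩, hsec2 G hG⟩
        exact ((h.image F).mono this)
      · rintro _ ⟨G, hG, rfl⟩
        -- R ⊆ F (sec G) = G : pick G' ∈ 𝔊 with G' ≠ G
        have : ∃ G' ∈ 𝔊, G' ≠ G := by
          by_contra h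
          push_neg at h
          exact h𝔊unc ((Set.countable_singleton G).mono h)
        obtain ⟨G', hG', hne⟩ := this
        rw [hsec2 G hG]
        have := h𝔊 G hG G' hG' hne.symm
        rw [← this]
        exact Finset.inter_subset_left
      · rintro _ ⟨G, hG, rfl⟩ _ ⟨G', hG', rfl⟩ hne
        have hGG' : G ≠ G' := by
          rintro rfl; exact hne rfl
        rw [hsec2 G hG, hsec2 G' hG']
        exact h𝔊 G hG G' hG' hGG'
  obtain ⟨R, T3, hT3sub, hT3unc, hRsub, hRinter⟩ := hΔ
  have hT3T1 : T3 ⊆ T1 := fun z hz => (hT3sub hz).1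
  -- tuples
  set m := n - R.card with hmdef
  have hEcard : ∀ z ∈ T3, (F z \ R).card = m := by
    intro z hz
    rw [Finset.card_sdiff_of_subset (hRsub z hz), (hT3sub hz).2]
  have hfonotF : ∀ z ∈ T1, ∀ z' : ↥Z, fo z ∉ F z' := by
    intro z hz z' h
    exact hT1b z hz (hFX z' h)
  have hAcard : ∀ z ∈ T3, (insert (fo z) (F z \ R)).card = m + 1 := by
    intro z hz
    rw [Finset.card_insert_of_notMem (fun h => hfonotF z (hT3T1 hz) z (Finset.mem_sdiff.1 h).1),
      hEcard z hz]
  have hordnefo : ∀ z ∈ T1, ord z ≠ fo z := by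
    intro z hz h
    exact hT1a z hz (h ▸ foY z)
  have hBcard : ∀ z ∈ T1, ({ord z, fo z} : Finset Ordinal).card = 2 :=
    fun z hz => Finset.card_pair (hordnefo z hz)
  set atup : ↥Z → Fin (m+1) → Ordinal := fun z => tupD (m+1) (insert (fo z) (F z \ R))
    with hatup
  set btup : ↥Z → Fin 2 → Ordinal := fun z => tupD 2 ({ord z, fo z} : Finset Ordinal)
    with hbtup
  -- basic facts about the tuples
  have hamem : ∀ z ∈ T3, ∀ i, atup z i ∈ insert (fo z) (F z \ R) := by
    intro z hz i
    rw [show atup z = (insert (fo z) (F z \ R)).orderEmbOfFin (hAcard z hz) from tupD_eq _]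
    exact Finset.orderEmbOfFin_mem _ _ _
  have hasurj : ∀ z ∈ T3, ∀ ξ ∈ insert (fo z) (F z \ R), ∃ i, atup z i = ξ := by
    intro z hz ξ hξ
    have hr := Finset.range_orderEmbOfFin (insert (fo z) (F z \ R)) (hAcard z hz)
    rw [← show atup z = (insert (fo z) (F z \ R)).orderEmbOfFin (hAcard z hz) from tupD_eq _]
      at hr
    exact Set.mem_range.1 (by rw [hr]; exact hξ)
  have hbmem : ∀ z ∈ T1, ∀ j, btup z j ∈ ({ord z, fo z} : Finset Ordinal) := by
    intro z hz j
    rw [show btup z = ({ord z, fo z} : Finset Ordinal).orderEmbOfFin (hBcard z hz)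
      from tupD_eq _]
    exact Finset.orderEmbOfFin_mem _ _ _
  -- thinning (a): root pattern
  set g1 : ↥Z → ({x // x ∈ R} → Bool) := fun z ξ => decide (ord z ∈ Wset c ξ.val) with hg1
  obtain ⟨pR, hT4unc⟩ := exists_fiber_uncountable hT3unc g1
  set T4 := {z ∈ T3 | g1 z = pR} with hT4def
  -- thinning (b): pattern along the tuple
  set g2 : ↥Z → (Fin (m+1) → Bool) := fun z i => decide (ord z ∈ Wset c (atup z i)) with hg2
  obtain ⟨χb, hT5unc⟩ := exists_fiber_uncountable hT4unc g2
  set T5 := {z ∈ T4 | g2 z = χb} with hT5def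
  -- thinning (c): position of fo z in the tuple
  set g3 : ↥Z → Fin (m+1) := fun z =>
    if h : ∃ i : Fin (m+1), atup z i = fo z then h.choose else ⟨0, Nat.succ_pos m⟩ with hg3
  obtain ⟨tpos, hT6unc⟩ := exists_fiber_uncountable hT5unc g3
  set T6 := {z ∈ T5 | g3 z = tpos} with hT6def
  -- thinning (d): relative order of ord z and fo z
  set g4 : ↥Z → Bool := fun z => decide (ord z < fo z) with hg4
  obtain ⟨ob, hT7unc⟩ := exists_fiber_uncountable hT6unc g4
  set T7 := {z ∈ T6 | g4 z = ob} with hT7def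
  have hT7T6 : T7 ⊆ T6 := fun z hz => hz.1
  have hT7T5 : T7 ⊆ T5 := fun z hz => hz.1.1
  have hT7T4 : T7 ⊆ T4 := fun z hz => hz.1.1.1
  have hT7T3 : T7 ⊆ T3 := fun z hz => hz.1.1.1.1
  have hT7T1 : T7 ⊆ T1 := fun z hz => hT3T1 (hT7T3 hz)
  -- atup z tpos = fo z on T6
  have hatpos : ∀ z ∈ T6, atup z tpos = fo z := by
    intro z hz
    have hex : ∃ i : Fin (m+1), atup z i = fo z :=
      hasurj z hz.1.1.1 (fo z) (Finset.mem_insert_self _ _)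
    have h3 : g3 z = hex.choose := dif_pos hex
    rw [hz.2] at h3
    rw [h3]
    exact hex.choose_spec
  -- positions in btup
  set wpos : Fin 2 := if ob then 0 else 1 with hwposdef
  set fpos : Fin 2 := if ob then 1 else 0 with hfposdef
  have hpair : ∀ (u v : Ordinal) (huv : u < v) (h2 : ({u, v} : Finset Ordinal).card = 2),
      ({u,v} : Finset Ordinal).orderEmbOfFin h2 0 = u ∧
      ({u,v} : Finset Ordinal).orderEmbOfFin h2 1 = v := by
    intro u v huv h2
    have h0 : ({u,v} : Finset Ordinal).orderEmbOfFin h2 0 ∈ ({u,v} : Finset Ordinal) :=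
      Finset.orderEmbOfFin_mem _ _ _
    have h1 : ({u,v} : Finset Ordinal).orderEmbOfFin h2 1 ∈ ({u,v} : Finset Ordinal) :=
      Finset.orderEmbOfFin_mem _ _ _
    have h01 : ({u,v} : Finset Ordinal).orderEmbOfFin h2 0 <
        ({u,v} : Finset Ordinal).orderEmbOfFin h2 1 :=
      (Finset.orderEmbOfFin _ h2).strictMono (by decide)
    simp only [Finset.mem_insert, Finset.mem_singleton] at h0 h1
    rcases h0 with h0 | h0 <;> rcases h1 with h1 | h1
    · rw [h0, h1] at h01; exact absurd h01 (lt_irrefl u)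
    · exact ⟨h0, h1⟩
    · rw [h0, h1] at h01; exact absurd h01 (asymm huv)
    · rw [h0, h1] at h01; exact absurd h01 (lt_irrefl v)
  have hbt : ∀ z ∈ T7, btup z wpos = ord z ∧ btup z fpos = fo z := by
    intro z hz
    have hz1 : z ∈ T1 := hT7T1 hz
    have hob : decide (ord z < fo z) = ob := hz.2
    cases hob' : ob with
    | true =>
      have hlt : ord z < fo z := of_decide_eq_true (hob' ▸ hob)
      have := hpair (ord z) (fo z) hlt (hBcard z hz1)
      rw [show btup z = ({ord z, fo z} : Finset Ordinal).orderEmbOfFin (hBcard z hz1)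
        from tupD_eq _]
      simp only [hwposdef, hfposdef, hob', if_true]
      exact this
    | false =>
      have hnlt : ¬ (ord z < fo z) := of_decide_eq_false (hob' ▸ hob)
      have hlt : fo z < ord z := lt_of_le_of_ne (le_of_not_gt hnlt)
        (fun h => hordnefo z hz1 h.symm)
      have hcard' : ({fo z, ord z} : Finset Ordinal).card = 2 :=
        Finset.card_pair (fun h => hordnefo z hz1 h.symm)
      have hpp := hpair (fo z) (ord z) hlt hcard'
      have hbeq : btup z = ({fo z, ord z} : Finset Ordinal).orderEmbOfFin hcard' := by
        have hsets : ({ord z, fo z} : Finset Ordinal) = {fo z, ord z} := Finset.pair_comm _ _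
        rw [hbtup]
        simp only [hsets]
        exact tupD_eq _
      rw [hbeq]
      simp only [hwposdef, hfposdef, hob', if_false]
      exact ⟨hpp.2, hpp.1⟩
  -- the two families
  set A : Set (Fin (m+1) → Ordinal) := atup '' T7 with hAdef
  set B : Set (Fin 2 → Ordinal) := btup '' T7 with hBdef
  have hA1 : ∀ a ∈ A, StrictMono a ∧ ∀ i, a i < omega1 := by
    rintro _ ⟨z, hz, rfl⟩
    have hz3 := hT7T3 hz
    constructor
    · rw [show atup z = (insert (fo z) (F z \ R)).orderEmbOfFin (hAcard z hz3) from tupD_eq _]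
      exact (Finset.orderEmbOfFin _ _).strictMono
    · intro i
      have := hamem z hz3 i
      rcases Finset.mem_insert.1 this with h | h
      · rw [h]; exact folt z
      · exact hX (hFX z (Finset.mem_sdiff.1 h).1)
  have hB1 : ∀ b ∈ B, StrictMono b ∧ ∀ j, b j < omega1 := by
    rintro _ ⟨z, hz, rfl⟩
    have hz1 := hT7T1 hz
    constructor
    · rw [show btup z = ({ord z, fo z} : Finset Ordinal).orderEmbOfFin (hBcard z hz1)
        from tupD_eq _]
      exact (Finset.orderEmbOfFin _ _).strictMono
    · intro j
      rcases Finset.mem_insert.1 (hbmem z hz1 j) with h | h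
      · rw [h]; exact ordlt z
      · rw [Finset.mem_singleton.1 h]; exact folt z
  have hA2 : ∀ a ∈ A, ∀ a' ∈ A, a ≠ a' → ∀ i i', a i ≠ a' i' := by
    rintro _ ⟨z, hz, rfl⟩ _ ⟨z', hz', rfl⟩ hne i i' heq
    have hzz' : z ≠ z' := by rintro rfl; exact hne rfl
    have h1 := hamem z (hT7T3 hz) i
    have h2 := hamem z' (hT7T3 hz') i'
    rw [heq] at h1
    rcases Finset.mem_insert.1 h1 with ha | ha <;> rcases Finset.mem_insert.1 h2 with hb | hb
    · exact hzz' (foinj (by rw [← ha, ← hb]))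
    · exact hfonotF z (hT7T1 hz) z' (Finset.mem_sdiff.1 (ha ▸ hb)).1
    · exact hfonotF z' (hT7T1 hz') z (Finset.mem_sdiff.1 (hb ▸ ha)).1
    · have hx1 := Finset.mem_sdiff.1 ha
      have hx2 := Finset.mem_sdiff.1 hb
      have : atup z' i' ∈ F z ∩ F z' := Finset.mem_inter.2 ⟨hx1.1, hx2.1⟩
      rw [hRinter z (hT7T3 hz) z' (hT7T3 hz') hzz'] at this
      exact hx1.2 this
  have hB2 : ∀ b ∈ B, ∀ b' ∈ B, b ≠ b' → ∀ j j', b j ≠ b' j' := by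
    rintro _ ⟨z, hz, rfl⟩ _ ⟨z', hz', rfl⟩ hne j j' heq
    have hzz' : z ≠ z' := by rintro rfl; exact hne rfl
    have h1 := hbmem z (hT7T1 hz) j
    have h2 := hbmem z' (hT7T1 hz') j'
    rw [heq] at h1
    simp only [Finset.mem_insert, Finset.mem_singleton] at h1 h2
    rcases h1 with ha | ha <;> rcases h2 with hb | hb
    · exact hzz' (ordinj (by rw [← ha, ← hb]))
    · exact hT1a z (hT7T1 hz) (by rw [ha.symm.trans hb]; exact foY z')
    · exact hT1a z' (hT7T1 hz') (by rw [hb.symm.trans ha]; exact foY z)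
    · exact hzz' (foinj (by rw [← ha, ← hb]))
  have hAinj : Set.InjOn atup T7 := by
    intro z hz z' hz' h
    apply foinj
    rw [← hatpos z (hT7T6 hz), ← hatpos z' (hT7T6 hz'), h]
  have hBinj : Set.InjOn btup T7 := by
    intro z hz z' hz' h
    apply ordinj
    rw [← (hbt z hz).1, ← (hbt z' hz').1, h]
  have hAunc : ¬ A.Countable := fun h => hT7unc (countable_of_image h hAinj)
  have hBunc : ¬ B.Countable := fun h => hT7unc (countable_of_image h hBinj)
  set χ : Fin (m+1) → Fin 2 := fun i => if i = tpos then 0 else (if χb i then 1 else 0)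
    with hχdef
  set π : Fin (m+1) → Fin 2 := fun i => if i = tpos then fpos else wpos with hπdef
  obtain ⟨a, haA, b, hbB, hlt, hcol⟩ := hc (m+1) 2 (Nat.succ_pos m) (by norm_num)
    A B hA1 hB1 hA2 hB2 hAunc hBunc χ π
  obtain ⟨z, hz, rfl⟩ := haA
  obtain ⟨w, hw, rfl⟩ := hbB
  have hz3 := hT7T3 hz
  have hw1 := hT7T1 hw
  -- w matches the pattern of z on F z
  have hmatch : ∀ ξ ∈ F z, (ord w ∈ Wset c ξ ↔ ord z ∈ Wset c ξ) := by
    intro ξ hξ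
    by_cases hξR : ξ ∈ R
    · have hzp : g1 z = pR := (hT7T4 hz).2
      have hwp : g1 w = pR := (hT7T4 hw).2
      have h1 := congrFun hzp ⟨ξ, hξR⟩
      have h2 := congrFun hwp ⟨ξ, hξR⟩
      simp only [hg1] at h1 h2
      exact decide_eq_decide.1 (h2.trans h1.symm)
    · have hmem : ξ ∈ insert (fo z) (F z \ R) :=
        Finset.mem_insert_of_mem (Finset.mem_sdiff.2 ⟨hξ, hξR⟩)
      obtain ⟨i, hi⟩ := hasurj z hz3 ξ hmem
      have hine : i ≠ tpos := by
        intro h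
        rw [h, hatpos z (hT7T6 hz)] at hi
        exact hfonotF z (hT7T1 hz) z (hi ▸ hξ)
      -- value for z
      have hzv : decide (ord z ∈ Wset c ξ) = χb i := by
        have := congrFun (hT7T5 hz).2 i
        simp only [hg2] at this
        rw [← hi]; exact this
      -- value for w
      have hltw : ξ < ord w := by
        rw [← hi, ← (hbt w hw).1]
        exact hlt i wpos
      have hχi : χ i = (if χb i then 1 else 0) := by simp only [hχdef, if_neg hine]
      have hπi : π i = wpos := by simp only [hπdef, if_neg hine]
      have hwv : c ξ (ord w) = (if χb i then 1 else 0) := by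
        have h := hcol i
        rw [hχi, hπi, hi, (hbt w hw).1] at h
        exact h
      rw [mem_Wset_iff hltw (ordlt w)]
      rw [hwv]
      cases hcb : χb i with
      | true =>
        rw [hcb] at hzv
        rw [if_pos rfl]
        exact iff_of_true rfl (of_decide_eq_true hzv)
      | false =>
        rw [hcb] at hzv
        rw [if_neg (by decide : ¬ (false = true))]
        constructor
        · intro h; exact absurd h (by decide)
        · intro h
          rw [decide_eq_false_iff_not] at hzv
          exact absurd h hzv
  have hP : fo w ∈ Wset c (fo z) := hFP z w hmatch
  have hfz : atup z tpos = fo z := hatpos z (hT7T6 hz)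
  have hfw : btup w fpos = fo w := (hbt w hw).2
  have hltf : fo z < fo w := by
    rw [← hfz, ← hfw]
    exact hlt tpos fpos
  rw [mem_Wset_iff hltf (folt w)] at hP
  have hc0 : c (fo z) (fo w) = 0 := by
    have hχt : χ tpos = 0 := by simp only [hχdef, if_pos rfl]
    have hπt : π tpos = fpos := by simp only [hπdef, if_pos rfl]
    have h := hcol tpos
    rw [hχt, hπt, hfz, hfw] at h
    exact h
  rw [hc0] at hP
  exact absurd hP (by decide)
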